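/- arXiv:2307.04281 — 2 statements merged into one kernel-verified Lean document; each statement's English description precedes it below -/
import Mathlib

section
/- Let F be an elliptic curve over an algebraically closed field, a ∈ F a point of order at least 4, and φ an automorphism of F fixing the origin. If φ(a) = a, then φ is the identity. -/
/-!
STATEMENT 9 (Lemma 3.2).

Let `F` be an elliptic curve over an algebraically closed field, `a ∈ F` a
point of order at least 4, and `φ` an automorphism of `F` fixing the origin.
If `φ(a) = a` then `φ = id`.

Abstract setup: `F` is the group of points of the elliptic curve, `Aut0` is
the subgroup of `AddAut F` consisting of the automorphisms of the elliptic
curve fixing the origin.  The facts granted by the context are axiomatized: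
* every `φ ∈ Aut₀(F)` has order in `{1,2,3,4,6}` (`order_mem`);
* if `φ ∈ Aut₀(F)` has order 2, 4 or 6, then some power of `φ` is `-id`
  (`pow_neg`);
* if `φ ∈ Aut₀(F)` has order 3 then, `End(F)` being an integral domain,
  `φ² + φ + id = 0` (`cubic`).
"Order at least 4" is taken to mean `4 ≤ addOrderOf a`, or `a` of infinite
order.
-/
theorem aut_fixing_point_of_order_ge_four_is_id
    (F : Type) [AddCommGroup F]
    (Aut0 : AddSubgroup (AddAut F))
    (order_mem : ∀ φ ∈ Aut0, addOrderOf φ ∈ ({1, 2, 3, 4, 6} : Set ℕ))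
    (pow_neg : ∀ φ ∈ Aut0, (addOrderOf φ = 2 ∨ addOrderOf φ = 4 ∨ addOrderOf φ = 6) →
      ∃ i : ℕ, ∀ x : F, (i • φ) x = -x)
    (cubic : ∀ φ ∈ Aut0, addOrderOf φ = 3 → ∀ x : F, φ (φ x) + φ x + x = 0)
    (a : F) (ha : 4 ≤ addOrderOf a ∨ ¬ IsOfFinAddOrder a)
    (φ : AddAut F) (hφ : φ ∈ Aut0) (hfix : φ a = a) :
    φ = 0 := by
  have hpow : ∀ i : ℕ, (i • φ) a = a := by
    intro i
    induction i with
    | zero => rfl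
    | succ n ih =>
      rw [succ_nsmul, AddAut.add_apply, hfix, ih]
  have hcontr : ∀ n : ℕ, 0 < n → n ≤ 3 → n • a = 0 → False := by
    intro n hn hn3 hsmul
    rcases ha with h4 | hinf
    · have hdvd : addOrderOf a ∣ n := addOrderOf_dvd_of_nsmul_eq_zero hsmul
      have := Nat.le_of_dvd hn hdvd
      omega
    · exact hinf (isOfFinAddOrder_iff_nsmul_eq_zero.mpr ⟨n, hn, hsmul⟩)
  have hmem := order_mem φ hφ
  simp only [Set.mem_insert_iff, Set.mem_singleton_iff] at hmem
  rcases hmem with h1 | h246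
  · exact AddMonoid.addOrderOf_eq_one_iff.mp h1
  rcases h246 with h2 | h3 | h4 | h6
  · exfalso
    obtain ⟨i, hi⟩ := pow_neg φ hφ (Or.inl h2)
    have := hi a
    rw [hpow i] at this
    exact hcontr 2 (by norm_num) (by norm_num) (by rw [two_nsmul]; nth_rewrite 2 [this]; abel)
  · exfalso
    have := cubic φ hφ h3 a
    rw [hfix, hfix] at this
    exact hcontr 3 (by norm_num) le_rfl
      (by rw [show (3 : ℕ) • a = a + a + a by abel]; exact this)
  · exfalso
    obtain ⟨i, hi⟩ := pow_neg φ hφ (Or.inr (Or.inl h4))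
    have := hi a
    rw [hpow i] at this
    exact hcontr 2 (by norm_num) (by norm_num) (by rw [two_nsmul]; nth_rewrite 2 [this]; abel)
  · exfalso
    obtain ⟨i, hi⟩ := pow_neg φ hφ (Or.inr (Or.inr h6))
    have := hi a
    rw [hpow i] at this
    exact hcontr 2 (by norm_num) (by norm_num) (by rw [two_nsmul]; nth_rewrite 2 [this]; abel)
end

section
/- Let F be an elliptic curve over an algebraically closed field of characteristic p > 0, and let a ∈ F be a point of order p^e ≥ 4 for some e > 0. Then F is ordinary, and the natural injection H^a_F → Aut_0(F) is an isomorphism of groups. -/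
/-!
STATEMENT 11 (Lemma 3.5).

Let `F` be an elliptic curve over an algebraically closed field of
characteristic `p > 0` and let `a ∈ F` be a point of order `p^e ≥ 4` with
`e > 0`.  Then `F` is ordinary and the natural injection `H^a_F → Aut₀(F)` is
an isomorphism of groups.

Abstract setup: `F` is the group of points of the elliptic curve, `Aut0` is
the subgroup of `AddAut F` of automorphisms of the curve fixing the origin,
and `H^a_F := { i ∈ (ℤ/p^e)ˣ | ∃ φ ∈ Aut₀(F), φ(a) = i·a }`.  The context
facts are axiomatized:
* `Ordinary` holds iff `F` has a nontrivial `p`-torsion point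
  (supersingular curves have trivial `p`-power torsion) — `ordinary_iff`;
* for ordinary `F`, `F[p^e] ≅ ℤ/p^e` is cyclic, generated by any point of
  order `p^e` — `torsion_cyclic`;
* the uniqueness of `φ ∈ Aut₀(F)` with `φ(a) = i·a` (Lemma 3.2) —
  `fix_unique`.
-/
instance AddAut.group (A : Type) [Add A] : Group (AddAut A) where
  mul g h := AddEquiv.trans h g
  one := AddEquiv.refl _
  inv := AddEquiv.symm
  mul_assoc _ _ _ := rfl
  one_mul _ := rfl
  mul_one _ := rfl
  inv_mul_cancel := AddEquiv.self_trans_symm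

theorem H_a_F_iso_Aut0_for_p_power_order
    (p : ℕ) (hp : p.Prime)
    (F : Type) [AddCommGroup F]
    (Aut0 : Subgroup (AddAut F))
    (Ordinary : Prop)
    (ordinary_iff : Ordinary ↔ ∃ x : F, x ≠ 0 ∧ p • x = 0)
    (torsion_cyclic : Ordinary → ∀ (e : ℕ) (x y : F), addOrderOf y = p ^ e →
      p ^ e • x = 0 → ∃ n : ℕ, x = n • y)
    (fix_unique : ∀ φ ∈ Aut0, ∀ x : F, 4 ≤ addOrderOf x → φ x = x → φ = 1)
    (e : ℕ) (he : 0 < e)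
    (a : F) (ha : addOrderOf a = p ^ e) (ha4 : 4 ≤ p ^ e) :
    Ordinary ∧
    ∃ H : Subgroup (ZMod (p ^ e))ˣ,
      (∀ i : (ZMod (p ^ e))ˣ,
        i ∈ H ↔ ∃ φ ∈ Aut0, φ a = ((i : ZMod (p ^ e)).val) • a) ∧
      ∃ f : H ≃* Aut0,
        ∀ i : H, ((f i : AddAut F)) a
          = (((i : (ZMod (p ^ e))ˣ) : ZMod (p ^ e)).val) • a := by
  have hPpos : 0 < p ^ e := lt_of_lt_of_le (by norm_num) ha4
  haveI : NeZero (p ^ e) := ⟨hPpos.ne'⟩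
  have haP : p ^ e • a = 0 := ha ▸ addOrderOf_nsmul_eq_zero a
  -- Ordinary
  have hord : Ordinary := by
    refine ordinary_iff.mpr ⟨p ^ (e - 1) • a, ?_, ?_⟩
    · intro h
      have hdvd : addOrderOf a ∣ p ^ (e - 1) := addOrderOf_dvd_iff_nsmul_eq_zero.mpr h
      rw [ha] at hdvd
      have := Nat.le_of_dvd (Nat.pow_pos hp.pos) hdvd
      have hlt : p ^ (e - 1) < p ^ e :=
        Nat.pow_lt_pow_right hp.one_lt (Nat.sub_lt he one_pos)
      omega
    · rw [smul_smul]
      have hpe : p * p ^ (e - 1) = p ^ e := by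
        rw [← pow_succ']; congr 1; omega
      rw [hpe, haP]
  refine ⟨hord, ?_⟩
  -- key coercion lemma: m • a depends only on m mod p^e
  have hsmul_mod : ∀ m k : ℕ, (m : ZMod (p ^ e)) = (k : ZMod (p ^ e)) → m • a = k • a := by
    intro m k hmk
    rw [nsmul_eq_nsmul_iff_modEq, ha]
    exact (ZMod.natCast_eq_natCast_iff _ _ _).mp hmk
  have hsmul_mod' : ∀ m k : ℕ, m • a = k • a → (m : ZMod (p ^ e)) = (k : ZMod (p ^ e)) := by
    intro m k hmk
    rw [ZMod.natCast_eq_natCast_iff]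
    rw [nsmul_eq_nsmul_iff_modEq, ha] at hmk
    exact hmk
  -- every φ ∈ Aut0 sends a to a multiple of a
  have hex : ∀ φ : Aut0, ∃ n : ℕ, (φ : AddAut F) a = n • a := by
    intro φ
    refine torsion_cyclic hord e ((φ : AddAut F) a) a ha ?_
    have hmap : ((φ : AddAut F)) (p ^ e • a) = p ^ e • ((φ : AddAut F)) a :=
      map_nsmul (φ : AddAut F) (p ^ e) a
    rw [← hmap, haP, map_zero]
  classical
  set c : Aut0 → ℕ := fun φ => (hex φ).choose with hc
  have hcspec : ∀ φ : Aut0, (φ : AddAut F) a = c φ • a := fun φ => (hex φ).choose_spec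
  -- order of φ a is p^e, so c φ is coprime to p^e
  have horder : ∀ φ : Aut0, addOrderOf ((φ : AddAut F) a) = p ^ e := by
    intro φ
    have h : addOrderOf ((φ : AddAut F) a) = addOrderOf a :=
      addOrderOf_injective ((φ : AddAut F) : F ≃+ F).toAddMonoidHom
        ((φ : AddAut F) : F ≃+ F).injective a
    rw [h, ha]
  have hcop : ∀ φ : Aut0, Nat.Coprime (c φ) (p ^ e) := by
    intro φ
    have h1 : addOrderOf (c φ • a) = p ^ e := by rw [← hcspec φ]; exact horder φ
    by_cases hc0 : c φ = 0
    · rw [hc0, zero_smul, addOrderOf_zero] at h1; omega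
    rw [addOrderOf_nsmul' a hc0, ha] at h1
    have hg : (p ^ e).gcd (c φ) ∣ p ^ e := Nat.gcd_dvd_left _ _
    have hgpos : 0 < (p ^ e).gcd (c φ) := Nat.gcd_pos_of_pos_left _ hPpos
    have := Nat.div_mul_cancel hg
    rw [h1] at this
    have hg1 : (p ^ e).gcd (c φ) = 1 := by
      nlinarith [Nat.le_of_dvd hPpos hg]
    exact Nat.Coprime.symm hg1
  -- the monoid hom g : Aut0 →* (ZMod (p^e))ˣ
  have gmul : ∀ φ ψ : Aut0,
      ((c (φ * ψ) : ZMod (p ^ e))) = ((c φ * c ψ : ℕ) : ZMod (p ^ e)) := by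
    intro φ ψ
    refine hsmul_mod' _ _ ?_
    rw [← hcspec (φ * ψ)]
    have : ((φ * ψ : Aut0) : AddAut F) a = (φ : AddAut F) ((ψ : AddAut F) a) := rfl
    rw [this, hcspec ψ]
    have hmap : ((φ : AddAut F)) (c ψ • a) = c ψ • ((φ : AddAut F)) a :=
      map_nsmul (φ : AddAut F) (c ψ) a
    rw [hmap, hcspec φ, smul_smul, mul_comm]
  set g : Aut0 →* (ZMod (p ^ e))ˣ :=
    { toFun := fun φ => ZMod.unitOfCoprime (c φ) (hcop φ)
      map_one' := by
        ext
        rw [ZMod.coe_unitOfCoprime, Units.val_one]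
        refine (hsmul_mod' (c 1) 1 ?_).trans (by simp)
        rw [← hcspec 1]; simp; rfl
      map_mul' := by
        intro φ ψ
        ext
        rw [ZMod.coe_unitOfCoprime, Units.val_mul, ZMod.coe_unitOfCoprime,
          ZMod.coe_unitOfCoprime, ← Nat.cast_mul]
        exact gmul φ ψ } with hg
  have hgval : ∀ φ : Aut0, ((g φ : ZMod (p ^ e))) = (c φ : ZMod (p ^ e)) := by
    intro φ; exact ZMod.coe_unitOfCoprime (c φ) (hcop φ)
  -- g φ determines φ a
  have hga : ∀ φ : Aut0, (φ : AddAut F) a = ((g φ : ZMod (p ^ e)).val) • a := by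
    intro φ
    rw [hcspec φ]
    refine hsmul_mod _ _ ?_
    rw [← hgval φ, ZMod.natCast_rightInverse _]
  -- injectivity of g
  have ginj : Function.Injective g := by
    intro φ ψ hφψ
    have h1 : (φ : AddAut F) a = (ψ : AddAut F) a := by
      rw [hga φ, hga ψ, hφψ]
    have h2 : ((ψ⁻¹ * φ : Aut0) : AddAut F) a = a := by
      have : ((ψ⁻¹ * φ : Aut0) : AddAut F) a = ((ψ : AddAut F))⁻¹ ((φ : AddAut F) a) := rfl
      rw [this, h1]
      exact ((ψ : AddAut F) : F ≃+ F).symm_apply_apply a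
    have h3 : ((ψ⁻¹ * φ : Aut0) : AddAut F) = 1 :=
      fix_unique _ (ψ⁻¹ * φ).2 a (by rw [ha]; exact ha4) h2
    have h4 : ψ⁻¹ * φ = 1 := Subtype.ext h3
    exact (inv_mul_eq_one.mp h4).symm
  -- the subgroup H = range of g and the equivalence
  refine ⟨g.range, ?_, ?_⟩
  · intro i
    constructor
    · rintro ⟨φ, rfl⟩
      exact ⟨(φ : AddAut F), φ.2, hga φ⟩
    · rintro ⟨φ, hφmem, hφa⟩
      refine ⟨⟨φ, hφmem⟩, ?_⟩
      ext
      rw [hgval ⟨φ, hφmem⟩]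
      have h1 : c ⟨φ, hφmem⟩ • a = (i : ZMod (p ^ e)).val • a := by
        rw [← hcspec ⟨φ, hφmem⟩]; exact hφa
      have := hsmul_mod' _ _ h1
      rw [this, ZMod.natCast_rightInverse _]
  · refine ⟨(MonoidHom.ofInjective ginj).symm, ?_⟩
    intro i
    have h1 : g ((MonoidHom.ofInjective ginj).symm i) = (i : (ZMod (p ^ e))ˣ) := by
      have := (MonoidHom.ofInjective ginj).apply_symm_apply i
      exact congrArg Subtype.val this
    rw [hga ((MonoidHom.ofInjective ginj).symm i), h1]
end
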